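/- Let ω : [0,T] → ℝ be a continuous path with ω(0) = 0, let b < 0 < b̄ < K (allowing K = ∞), and let H_b denote the first hitting time of level b by ω. Then the indicator of the event {sup ω ≥ b̄ and inf ω > b} is bounded above by (1/(K−b))·((ω(T)−K)⁺ − (b−ω(T))⁺ − (ω(T)−b)·1_{H_b < T}) + 1_{ω(T) > b}. -/
import Mathlib


open Set

noncomputable def pos (x : ℝ) : ℝ := max x 0

open Classical in
noncomputable def ind (P : Prop) : ℝ := if P then 1 else 0

/-- First hitting time (before time `T`) of level `x` by the path `ω`, valued in `EReal`
(`⊤` if the level is not hit in `[0,T]`). -/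
noncomputable def hit (ω : ℝ → ℝ) (T x : ℝ) : EReal :=
  sInf {s : EReal | ∃ t : ℝ, s = (t : EReal) ∧ 0 ≤ t ∧ t ≤ T ∧ ω t = x}


lemma ind_pos {P : Prop} (h : P) : ind P = 1 := if_pos h
lemma ind_neg {P : Prop} (h : ¬P) : ind P = 0 := if_neg h

theorem stmt0 (T : ℝ) (hT : 0 < T) (ω : ℝ → ℝ)
    (hcont : ContinuousOn ω (Icc 0 T)) (hω0 : ω 0 = 0)
    (lb ub K : ℝ) (hlb : lb < 0) (hub : 0 < ub) (hK : ub < K) :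
    ind (ub ≤ sSup (ω '' Icc 0 T) ∧ lb < sInf (ω '' Icc 0 T)) ≤
      (1 / (K - lb)) *
        (pos (ω T - K) - pos (lb - ω T) -
          (ω T - lb) * ind (hit ω T lb < (T : EReal))) +
      ind (lb < ω T) := by
  have hKlb : (0:ℝ) < K - lb := by linarith
  have hKlb' : (0:ℝ) < 1 / (K - lb) := by positivity
  have hbdd : BddBelow (ω '' Icc 0 T) :=
    (isCompact_Icc.image_of_continuousOn hcont).bddBelow
  by_cases hE : lb < sInf (ω '' Icc 0 T)
  · -- path never hits lb
    have hne : ∀ t, 0 ≤ t → t ≤ T → ω t ≠ lb := by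
      intro t ht1 ht2 h
      have hb : sInf (ω '' Icc 0 T) ≤ ω t := csInf_le hbdd ⟨t, ⟨ht1, ht2⟩, rfl⟩
      linarith
    have hset : {s : EReal | ∃ t : ℝ, s = (t : EReal) ∧ 0 ≤ t ∧ t ≤ T ∧ ω t = lb} = ∅ := by
      ext s
      simp only [mem_setOf_eq, mem_empty_iff_false, iff_false]
      rintro ⟨t, _, h1, h2, h3⟩
      exact hne t h1 h2 h3
    have hhit : ¬ (hit ω T lb < (T:EReal)) := by
      rw [hit, hset, sInf_empty]
      exact not_lt.2 le_top
    have hωT : lb < ω T := by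
      have : sInf (ω '' Icc 0 T) ≤ ω T := csInf_le hbdd ⟨T, ⟨le_of_lt hT, le_refl T⟩, rfl⟩
      linarith
    rw [ind_neg hhit, ind_pos hωT]
    have h1 : ind (ub ≤ sSup (ω '' Icc 0 T) ∧ lb < sInf (ω '' Icc 0 T)) ≤ 1 := by
      rw [ind]; split <;> norm_num
    have hpos1 : 0 ≤ pos (ω T - K) := le_max_right _ _
    have hpos2 : pos (lb - ω T) = 0 := max_eq_right (by linarith)
    rw [hpos2]
    nlinarith
  · have hind0 : ind (ub ≤ sSup (ω '' Icc 0 T) ∧ lb < sInf (ω '' Icc 0 T)) = 0 := by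
      exact ind_neg (by tauto)
    rw [hind0]
    have hi : ind (hit ω T lb < (T : EReal)) = 0 ∨ ind (hit ω T lb < (T : EReal)) = 1 := by
      rw [ind]; split <;> simp
    by_cases hωT : lb < ω T
    · rw [ind_pos hωT]
      have hpos1 : ω T - K ≤ pos (ω T - K) := le_max_left _ _
      have hpos1' : 0 ≤ pos (ω T - K) := le_max_right _ _
      have hpos2 : pos (lb - ω T) = 0 := max_eq_right (by linarith)
      rw [hpos2]
      have hck : (1/(K-lb)) * (K-lb) = 1 := one_div_mul_cancel (ne_of_gt hKlb)
      rcases hi with h | h <;> rw [h]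
      · nlinarith
      · nlinarith [mul_nonneg (le_of_lt hKlb')
          (show (0:ℝ) ≤ pos (ω T - K) - (ω T - lb) + (K - lb) by linarith), hck]
    · push_neg at hωT
      rw [ind_neg (not_lt.2 hωT)]
      have hpos1 : pos (ω T - K) = 0 := max_eq_right (by linarith)
      have hpos2 : pos (lb - ω T) = lb - ω T := max_eq_left (by linarith)
      rw [hpos1, hpos2]
      rcases eq_or_lt_of_le hωT with heq | hlt
      · rw [heq]; ring_nf; simp
      · -- ω T < lb : path hits lb strictly before T
        have hmem : lb ∈ Icc (ω T) (ω 0) := by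
          constructor <;> [linarith; linarith]
        obtain ⟨t, ht, htlb⟩ := intermediate_value_Icc' (le_of_lt hT) hcont hmem
        have htT : t < T := by
          rcases lt_or_eq_of_le ht.2 with h | h
          · exact h
          · exfalso; rw [h] at htlb; linarith
        have hhit : hit ω T lb < (T:EReal) := by
          have h1 : hit ω T lb ≤ (t : EReal) :=
            sInf_le ⟨t, rfl, ht.1, ht.2, htlb⟩
          exact lt_of_le_of_lt h1 (EReal.coe_lt_coe_iff.2 htT)
        rw [ind_pos hhit]
        ring_nf
        nlinarith
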